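/- Let λ > 0, let μ ∈ (0, 2/(2λ + L_f)], and let x̄₀, η ∈ ℝⁿ. Then the mapping x ↦ Prox_{μg}((1 − μλ)x − μ∇f(x) + μλx̄₀ + μη) from ℝⁿ to ℝⁿ is Lipschitz continuous with constant 1 − μλ, and 1 − μλ < 1, so it is a contraction. Moreover, over μ ∈ (0, 2/(2λ + L_f)] the contraction coefficient 1 − μλ attains its minimum value L_f/(2λ + L_f) exactly at μ = 2/(2λ + L_f). -/

import Mathlib

open Set Filter Topology
open scoped InnerProductSpace

noncomputable section

abbrev Euc (n : ℕ) := EuclideanSpace ℝ (Fin n)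

/-- Convexity for extended-real-valued functions. -/
def ConvexEReal {n : ℕ} (g : Euc n → EReal) : Prop :=
  ∀ x y : Euc n, ∀ a b : ℝ, 0 ≤ a → 0 ≤ b → a + b = 1 →
    g (a • x + b • y) ≤ (a : EReal) * g x + (b : EReal) * g y

/-- `g` is proper: nowhere `⊥` and somewhere finite. -/
def ProperE {n : ℕ} (g : Euc n → EReal) : Prop :=
  (∀ x, g x ≠ ⊥) ∧ ∃ x, g x ≠ ⊤

/-- `P` is the proximal mapping of `g`: for every `α > 0` and every `x`, `P α x` is
the unique minimizer over `ℝⁿ` of `y ↦ g y + (1/(2α)) ‖x - y‖²`. -/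
def IsProx {n : ℕ} (g : Euc n → EReal) (P : ℝ → Euc n → Euc n) : Prop :=
  ∀ α : ℝ, 0 < α → ∀ x p, P α x = p ↔
    (∀ y, g p + ((1/(2*α) * ‖x - p‖^2 : ℝ) : EReal) ≤ g y + ((1/(2*α) * ‖x - y‖^2 : ℝ) : EReal))

section Aux
variable {n : ℕ}

lemma curveDeriv (f : Euc n → ℝ) (f' : Euc n → Euc n)
    (hfgrad : ∀ z, HasGradientAt f (f' z) z) (x v : Euc n) (t : ℝ) :
    HasDerivAt (fun s : ℝ => f (x + s • v)) ⟪f' (x + t • v), v⟫_ℝ t := by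
  have hc : HasDerivAt (fun s : ℝ => x + s • v) v t := by
    simpa using ((hasDerivAt_id t).smul_const v).const_add x
  have hF := (hasGradientAt_iff_hasFDerivAt.mp (hfgrad (x + t • v)))
  have := hF.comp_hasDerivAt t hc
  exact this

lemma curveConvex (f : Euc n → ℝ) (hconv : ConvexOn ℝ univ f) (x v : Euc n) :
    ConvexOn ℝ univ (fun s : ℝ => f (x + s • v)) := by
  refine ⟨convex_univ, ?_⟩
  intro s _ t _ a b ha hb hab
  have h : x + (a • s + b • t) • v = a • (x + s • v) + b • (x + t • v) := by
    have : a • (x + s • v) + b • (x + t • v) = (a + b) • x + (a * s + b * t) • v := by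
      module
    rw [this, hab, one_smul]; simp [smul_eq_mul]
  simp only [smul_eq_mul]
  rw [show x + (a * s + b * t) • v = a • (x + s • v) + b • (x + t • v) by
    simpa [smul_eq_mul] using h]
  exact hconv.2 (mem_univ _) (mem_univ _) ha hb hab

lemma grad_lower (f : Euc n → ℝ) (f' : Euc n → Euc n)
    (hconv : ConvexOn ℝ univ f) (hfgrad : ∀ z, HasGradientAt f (f' z) z) (x y : Euc n) :
    f x + ⟪f' x, y - x⟫_ℝ ≤ f y := by
  have hφc := curveConvex f hconv x (y - x)
  have hφd := curveDeriv f f' hfgrad x (y - x) 0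
  have hφd0 : HasDerivAt (fun s : ℝ => f (x + s • (y - x))) ⟪f' x, y - x⟫_ℝ 0 := by
    simpa using hφd
  have h := hφc.le_slope_of_hasDerivAt (mem_univ (0:ℝ)) (mem_univ (1:ℝ)) zero_lt_one hφd0
  rw [slope_def_field] at h
  have h1 : x + (1:ℝ) • (y - x) = y := by module
  have h0 : x + (0:ℝ) • (y - x) = x := by module
  rw [h1, h0] at h
  simp only [sub_zero, div_one] at h
  linarith

lemma descent (f : Euc n → ℝ) (f' : Euc n → Euc n) (Lf : ℝ) (hLf : 0 < Lf)
    (hfgrad : ∀ z, HasGradientAt f (f' z) z)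
    (hflip : ∀ z w, ‖f' z - f' w‖ ≤ Lf * ‖z - w‖) (x y : Euc n) :
    f y ≤ f x + ⟪f' x, y - x⟫_ℝ + Lf/2 * ‖y - x‖^2 := by
  set v := y - x with hv
  have hψd : ∀ t : ℝ, HasDerivAt
      (fun s : ℝ => f (x + s • v) - s * ⟪f' x, v⟫_ℝ - Lf/2 * s^2 * ‖v‖^2)
      (⟪f' (x + t • v), v⟫_ℝ - ⟪f' x, v⟫_ℝ - Lf * t * ‖v‖^2) t := by
    intro t
    have h1 := curveDeriv f f' hfgrad x v t
    have h2 : HasDerivAt (fun s : ℝ => s * ⟪f' x, v⟫_ℝ) ⟪f' x, v⟫_ℝ t := by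
      simpa using (hasDerivAt_id t).mul_const ⟪f' x, v⟫_ℝ
    have h3 : HasDerivAt (fun s : ℝ => Lf/2 * s^2 * ‖v‖^2) (Lf * t * ‖v‖^2) t := by
      have : HasDerivAt (fun s : ℝ => s^2) (2*t) t := by
        simpa using hasDerivAt_pow 2 t
      have h3' := (this.const_mul (Lf/2)).mul_const (‖v‖^2)
      exact h3'.congr_deriv (by ring)
    exact (h1.sub h2).sub h3
  have hanti : AntitoneOn
      (fun s : ℝ => f (x + s • v) - s * ⟪f' x, v⟫_ℝ - Lf/2 * s^2 * ‖v‖^2) (Icc 0 1) := by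
    apply antitoneOn_of_deriv_nonpos (convex_Icc 0 1)
    · exact fun t _ => (hψd t).continuousAt.continuousWithinAt
    · intro t _
      exact ((hψd t).differentiableAt).differentiableWithinAt
    · intro t ht
      rw [interior_Icc] at ht
      rw [(hψd t).deriv]
      have hb : ⟪f' (x + t • v) - f' x, v⟫_ℝ ≤ Lf * t * ‖v‖^2 := by
        calc ⟪f' (x + t • v) - f' x, v⟫_ℝ ≤ ‖f' (x + t • v) - f' x‖ * ‖v‖ :=
              real_inner_le_norm _ _
          _ ≤ (Lf * ‖(x + t • v) - x‖) * ‖v‖ := by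
              have := hflip (x + t • v) x
              nlinarith [norm_nonneg v]
          _ = Lf * t * ‖v‖^2 := by
              rw [show x + t • v - x = t • v by module, norm_smul]
              rw [Real.norm_eq_abs, abs_of_pos ht.1]; ring
      rw [inner_sub_left] at hb
      linarith
  have h01 := hanti (left_mem_Icc.mpr zero_le_one) (right_mem_Icc.mpr zero_le_one) zero_le_one
  simp only [zero_smul, add_zero, one_smul, zero_mul, mul_zero, sub_zero, zero_pow,
    one_pow, mul_one, one_mul] at h01
  have h1 : x + v = y := by rw [hv]; module
  rw [h1] at h01
  linarith

lemma convex_sub_inner (f : Euc n → ℝ) (hconv : ConvexOn ℝ univ f) (v : Euc n) :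
    ConvexOn ℝ univ (fun u => f u - ⟪v, u⟫_ℝ) := by
  refine ⟨convex_univ, ?_⟩
  intro p _ q _ a b ha hb hab
  have hf := hconv.2 (mem_univ p) (mem_univ q) ha hb hab
  have hi : ⟪v, a • p + b • q⟫_ℝ = a * ⟪v, p⟫_ℝ + b * ⟪v, q⟫_ℝ := by
    rw [inner_add_right, real_inner_smul_right, real_inner_smul_right]
  simp only [smul_eq_mul] at hf ⊢
  rw [hi]; ring_nf; ring_nf at hf; linarith

lemma grad_sub_inner (f : Euc n → ℝ) (f' : Euc n → Euc n)
    (hfgrad : ∀ z, HasGradientAt f (f' z) z) (v : Euc n) (u : Euc n) :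
    HasGradientAt (fun u => f u - ⟪v, u⟫_ℝ) (f' u - v) u := by
  rw [hasGradientAt_iff_hasFDerivAt]
  have h1 := hasGradientAt_iff_hasFDerivAt.mp (hfgrad u)
  have h2 : HasFDerivAt (fun u : Euc n => ⟪v, u⟫_ℝ)
      ((InnerProductSpace.toDualMap ℝ (Euc n)) v : Euc n →L[ℝ] ℝ) u :=
    ((InnerProductSpace.toDualMap ℝ (Euc n)) v).hasFDerivAt
  have := h1.sub h2
  refine this.congr_fderiv ?_
  ext w
  simp [inner_sub_left]

lemma cocoercive (f : Euc n → ℝ) (f' : Euc n → Euc n) (Lf : ℝ) (hLf : 0 < Lf)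
    (hconv : ConvexOn ℝ univ f) (hfgrad : ∀ z, HasGradientAt f (f' z) z)
    (hflip : ∀ z w, ‖f' z - f' w‖ ≤ Lf * ‖z - w‖) (z w : Euc n) :
    (1/Lf) * ‖f' z - f' w‖^2 ≤ ⟪f' z - f' w, z - w⟫_ℝ := by
  -- key inequality
  have key : ∀ a b : Euc n,
      f a - ⟪f' a, a⟫_ℝ ≤ f b - ⟪f' a, b⟫_ℝ - 1/(2*Lf) * ‖f' b - f' a‖^2 := by
    intro a b
    set h := fun u : Euc n => f u - ⟪f' a, u⟫_ℝ with hh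
    set h' := fun u : Euc n => f' u - f' a with hh'
    have hgrad : ∀ u, HasGradientAt h (h' u) u := fun u => grad_sub_inner f f' hfgrad (f' a) u
    have hcv : ConvexOn ℝ univ h := convex_sub_inner f hconv (f' a)
    have hlip : ∀ u₁ u₂, ‖h' u₁ - h' u₂‖ ≤ Lf * ‖u₁ - u₂‖ := by
      intro u₁ u₂
      simpa [hh', sub_sub_sub_cancel_right] using hflip u₁ u₂
    set b' := b - (1/Lf) • (h' b) with hb'
    have hd := descent h h' Lf hLf hgrad hlip b b'
    have hl := grad_lower h h' hcv hgrad a b'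
    have ha0 : h' a = 0 := by simp [hh']
    rw [ha0] at hl
    simp only [inner_zero_left, add_zero] at hl
    have hbb : b' - b = -(1/Lf) • (h' b) := by rw [hb']; module
    rw [hbb] at hd
    rw [real_inner_smul_right, norm_smul, real_inner_self_eq_norm_sq] at hd
    rw [Real.norm_eq_abs, mul_pow, sq_abs] at hd
    have hba : h' b = f' b - f' a := rfl
    have : h a ≤ h b - 1/(2*Lf) * ‖h' b‖^2 := by
      have hLf' : Lf ≠ 0 := ne_of_gt hLf
      calc h a ≤ h b' := hl
        _ ≤ h b + ⟪h' b, -(1/Lf) • h' b⟫_ℝ + Lf/2 * ((-(1/Lf))^2 * ‖h' b‖^2) := by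
            rw [real_inner_smul_right, real_inner_self_eq_norm_sq]
            exact hd
        _ = h b - 1/(2*Lf) * ‖h' b‖^2 := by
            rw [real_inner_smul_right, real_inner_self_eq_norm_sq]
            field_simp; ring
    simpa [hh, hba] using this
  have k1 := key z w
  have k2 := key w z
  have hn : ‖f' z - f' w‖ = ‖f' w - f' z‖ := norm_sub_rev _ _
  rw [inner_sub_left, inner_sub_right, inner_sub_right]
  have hn2 : ‖f' w - f' z‖^2 = ‖f' z - f' w‖^2 := by rw [← hn]
  have hc : 1/(2*Lf) * ‖f' z - f' w‖^2 + 1/(2*Lf) * ‖f' z - f' w‖^2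
      = 1/Lf * ‖f' z - f' w‖^2 := by field_simp; ring
  rw [hn2] at k1
  nlinarith [k1, k2]
end Aux

lemma prox_finite {n : ℕ} (g : Euc n → EReal) (hgproper : ProperE g)
    (P : ℝ → Euc n → Euc n) (hP : IsProx g P) (α : ℝ) (hα : 0 < α) (x : Euc n) :
    ∃ r : ℝ, g (P α x) = (r : EReal) := by
  have hmin := (hP α hα x (P α x)).mp rfl
  obtain ⟨y₀, hy₀⟩ := hgproper.2
  have hb := hgproper.1 (P α x)
  have htop : g (P α x) ≠ ⊤ := by
    intro htop
    have := hmin y₀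
    rw [htop] at this
    have hlhs : (⊤ : EReal) + ((1/(2*α) * ‖x - P α x‖^2 : ℝ) : EReal) = ⊤ := by
      exact EReal.top_add_of_ne_bot (EReal.coe_ne_bot _)
    rw [hlhs] at this
    have hrhs : g y₀ + ((1/(2*α) * ‖x - y₀‖^2 : ℝ) : EReal) < ⊤ :=
      EReal.add_lt_top hy₀ (EReal.coe_ne_top _)
    exact absurd (top_le_iff.mp this) (ne_of_lt hrhs)
  exact ⟨(g (P α x)).toReal, (EReal.coe_toReal htop hb).symm⟩

lemma prox_subgrad {n : ℕ} (g : Euc n → EReal) (hgproper : ProperE g) (hgconv : ConvexEReal g)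
    (P : ℝ → Euc n → Euc n) (hP : IsProx g P) (α : ℝ) (hα : 0 < α) (x q : Euc n)
    (r s : ℝ) (hr : g (P α x) = (r : EReal)) (hs : g q = (s : EReal)) :
    r + 1/α * ⟪x - P α x, q - P α x⟫_ℝ ≤ s := by
  set p := P α x with hp
  have hmin := (hP α hα x p).mp rfl
  -- for every t ∈ (0,1], a real inequality
  have hkey : ∀ t : ℝ, 0 < t → t ≤ 1 →
      r + 1/α * ⟪x - p, q - p⟫_ℝ - 1/(2*α) * t * ‖q - p‖^2 ≤ s := by
    intro t ht ht1
    set qt := (1 - t) • p + t • q with hqt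
    have hconv := hgconv p q (1-t) t (by linarith) (le_of_lt ht) (by ring)
    rw [hr, hs] at hconv
    have hconv' : g qt ≤ (((1-t) * r + t * s : ℝ) : EReal) := by
      rw [hqt]
      convert hconv using 2 <;> push_cast <;> ring
    have hmin' := hmin qt
    rw [hr] at hmin'
    have hchain : ((r : ℝ) : EReal) + ((1/(2*α) * ‖x - p‖^2 : ℝ) : EReal) ≤
        (((1-t) * r + t * s : ℝ) : EReal) + ((1/(2*α) * ‖x - qt‖^2 : ℝ) : EReal) :=
      le_trans hmin' (add_le_add_left hconv' _)
    rw [← EReal.coe_add, ← EReal.coe_add, EReal.coe_le_coe_iff] at hchain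
    -- expand the norm
    have hxqt : x - qt = (x - p) - t • (q - p) := by rw [hqt]; module
    have hexp : ‖x - qt‖^2 = ‖x - p‖^2 - 2 * t * ⟪x - p, q - p⟫_ℝ + t^2 * ‖q - p‖^2 := by
      rw [hxqt, norm_sub_sq_real, real_inner_smul_right, norm_smul, Real.norm_eq_abs,
        abs_of_pos ht, mul_pow]
      ring
    rw [hexp] at hchain
    have hα' : (0:ℝ) < 1/(2*α) := by positivity
    have hαne : α ≠ 0 := ne_of_gt hα
    have hI : 1/α * ⟪x - p, q - p⟫_ℝ = 2 * (1/(2*α) * ⟪x - p, q - p⟫_ℝ) := by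
      field_simp
    have hE : r + 2 * (1/(2*α) * ⟪x - p, q - p⟫_ℝ) - 1/(2*α) * t * ‖q - p‖^2 - s ≤ 0 := by
      by_contra hcon2
      push_neg at hcon2
      nlinarith [mul_pos ht hcon2, hchain]
    linarith [hE, hI]
  -- pass to the limit t → 0⁺
  by_contra hcon
  push_neg at hcon
  set ε := r + 1/α * ⟪x - p, q - p⟫_ℝ - s with hε
  have hεpos : 0 < ε := by rw [hε]; linarith
  set A := 1/(2*α) * ‖q - p‖^2 with hA
  have hA0 : 0 ≤ A := by positivity
  have ht0 : 0 < min 1 (ε / (A + 1)) := by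
    apply lt_min one_pos
    positivity
  have h := hkey (min 1 (ε / (A + 1))) ht0 (min_le_left _ _)
  have h2 : min 1 (ε / (A + 1)) * A ≤ (ε / (A + 1)) * A := by
    apply mul_le_mul_of_nonneg_right (min_le_right _ _) hA0
  have h3 : (ε / (A + 1)) * A < ε := by
    rw [div_mul_eq_mul_div, div_lt_iff₀ (by linarith)]
    nlinarith
  have h4 : 1/(2*α) * min 1 (ε / (A + 1)) * ‖q - p‖^2 = min 1 (ε / (A + 1)) * A := by
    rw [hA]; ring
  rw [h4] at h
  linarith

lemma prox_nonexpansive {n : ℕ} (g : Euc n → EReal) (hgproper : ProperE g)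
    (hgconv : ConvexEReal g) (P : ℝ → Euc n → Euc n) (hP : IsProx g P)
    (α : ℝ) (hα : 0 < α) (x y : Euc n) :
    ‖P α x - P α y‖ ≤ ‖x - y‖ := by
  obtain ⟨r, hr⟩ := prox_finite g hgproper P hP α hα x
  obtain ⟨s, hs⟩ := prox_finite g hgproper P hP α hα y
  set p := P α x
  set q := P α y
  have h1 := prox_subgrad g hgproper hgconv P hP α hα x q r s hr hs
  have h2 := prox_subgrad g hgproper hgconv P hP α hα y p s r hs hr
  have hα' : (0:ℝ) < 1/α := by positivity
  have hsum : ⟪x - p, q - p⟫_ℝ + ⟪y - q, p - q⟫_ℝ ≤ 0 := by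
    by_contra hc
    push_neg at hc
    nlinarith
  have hid : ⟪x - p, q - p⟫_ℝ + ⟪y - q, p - q⟫_ℝ
      = ⟪x - y, q - p⟫_ℝ + ‖q - p‖^2 := by
    have e1 : y - q = (y - x) + (x - p) - (q - p) := by module
    rw [e1]
    have e2 : ⟪(y - x) + (x - p) - (q - p), p - q⟫_ℝ
        = ⟪y - x, p - q⟫_ℝ + ⟪x - p, p - q⟫_ℝ - ⟪q - p, p - q⟫_ℝ := by
      rw [inner_sub_left, inner_add_left]
    rw [e2]
    have e3 : (p : Euc n) - q = -(q - p) := by module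
    rw [e3]
    simp only [inner_neg_right, inner_neg_left]
    have e4 : ⟪q - p, q - p⟫_ℝ = ‖q - p‖^2 := real_inner_self_eq_norm_sq _
    have e5 : ⟪y - x, q - p⟫_ℝ = -⟪x - y, q - p⟫_ℝ := by
      rw [show y - x = -(x - y) by module, inner_neg_left]
    rw [e4]
    linarith [e5]
  rw [hid] at hsum
  have hfirm : ‖q - p‖^2 ≤ ⟪x - y, p - q⟫_ℝ := by
    have : ⟪x - y, q - p⟫_ℝ = -⟪x - y, p - q⟫_ℝ := by
      rw [show q - p = -(p - q) by module, inner_neg_right]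
    linarith
  have hcs : ⟪x - y, p - q⟫_ℝ ≤ ‖x - y‖ * ‖p - q‖ := real_inner_le_norm _ _
  have hqp : ‖q - p‖ = ‖p - q‖ := norm_sub_rev _ _
  rw [hqp] at hfirm
  rcases eq_or_lt_of_le (norm_nonneg (p - q)) with h0 | h0
  · rw [← h0]; exact norm_nonneg _
  · have : ‖p - q‖^2 ≤ ‖x - y‖ * ‖p - q‖ := le_trans hfirm hcs
    nlinarith

lemma step_contract (f : Euc n → ℝ) (f' : Euc n → Euc n) (Lf : ℝ) (hLf : 0 < Lf)
    (hconv : ConvexOn ℝ univ f) (hfgrad : ∀ z, HasGradientAt f (f' z) z)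
    (hflip : ∀ z w, ‖f' z - f' w‖ ≤ Lf * ‖z - w‖)
    (lam mu : ℝ) (hlam : 0 < lam) (hmu0 : 0 < mu) (hmu2 : mu * (2*lam + Lf) ≤ 2)
    (z w : Euc n) :
    ‖((1 - mu*lam) • z - mu • f' z) - ((1 - mu*lam) • w - mu • f' w)‖
      ≤ (1 - mu*lam) * ‖z - w‖ := by
  set a := 1 - mu*lam with hadef
  have ha0 : 0 ≤ a := by nlinarith
  set u := z - w with hu
  set d := f' z - f' w with hd
  have hrw : ((1 - mu*lam) • z - mu • f' z) - ((1 - mu*lam) • w - mu • f' w)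
      = a • u - mu • d := by rw [hadef, hu, hd]; module
  rw [hrw]
  have hsq : ‖a • u - mu • d‖^2 = a^2 * ‖u‖^2 - 2*(a*mu)*⟪u, d⟫_ℝ + mu^2 * ‖d‖^2 := by
    rw [norm_sub_sq_real, real_inner_smul_left, real_inner_smul_right,
      norm_smul, norm_smul, Real.norm_eq_abs, Real.norm_eq_abs,
      abs_of_nonneg ha0, abs_of_pos hmu0, mul_pow, mul_pow]
    ring
  have hud : ⟪u, d⟫_ℝ = ⟪d, u⟫_ℝ := real_inner_comm _ _
  have hco : (1/Lf) * ‖f' z - f' w‖^2 ≤ ⟪f' z - f' w, z - w⟫_ℝ :=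
    cocoercive f f' Lf hLf hconv hfgrad hflip z w
  have hmuLf : mu * Lf ≤ 2 * a := by rw [hadef]; nlinarith
  have hbound : ‖a • u - mu • d‖^2 ≤ (a * ‖u‖)^2 := by
    rw [hsq]
    have hco' : (1/Lf) * ‖d‖^2 ≤ ⟪d, u⟫_ℝ := by rw [hd, hu]; exact hco
    have hIn : (1/Lf) * ‖d‖^2 ≤ ⟪u, d⟫_ℝ := by rw [hud]; exact hco'
    have hamu : (0:ℝ) ≤ 2 * (a * mu) := by
      have := mul_nonneg ha0 (le_of_lt hmu0); linarith
    have hq : mu^2 ≤ 2 * a * mu * (1/Lf) := by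
      have h' := mul_le_mul_of_nonneg_left hmuLf (le_of_lt hmu0)
      have hLfne : Lf ≠ 0 := ne_of_gt hLf
      have h'' := mul_le_mul_of_nonneg_right h' (le_of_lt (inv_pos.mpr hLf))
      calc mu^2 = mu * (mu * Lf) * Lf⁻¹ := by field_simp
        _ ≤ mu * (2 * a) * Lf⁻¹ := h''
        _ = 2 * a * mu * (1/Lf) := by rw [one_div]; ring
    have t1 := mul_le_mul_of_nonneg_left hIn hamu
    have t2 := mul_le_mul_of_nonneg_right hq (sq_nonneg ‖d‖)
    clear_value a u d
    nlinarith [t1, t2]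
  have hnn : 0 ≤ a * ‖u‖ := mul_nonneg ha0 (norm_nonneg _)
  exact (pow_le_pow_iff_left₀ (norm_nonneg _) hnn two_ne_zero).mp hbound

/-- For `λ > 0` and `μ ∈ (0, 2/(2λ + L_f)]`, the mapping
`x ↦ Prox_{μg}((1-μλ)x - μ∇f(x) + μλx̄₀ + μη)` is Lipschitz with constant `1 - μλ < 1`,
hence a contraction; moreover over `μ ∈ (0, 2/(2λ + L_f)]` the coefficient `1 - μλ`
attains its minimum `L_f/(2λ + L_f)` exactly at `μ = 2/(2λ + L_f)`. -/
theorem stmt1 {n : ℕ}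
    (f : Euc n → ℝ) (f' : Euc n → Euc n) (Lf : ℝ) (hLf : 0 < Lf)
    (hfconv : ConvexOn ℝ Set.univ f)
    (hfgrad : ∀ z, HasGradientAt f (f' z) z)
    (hflip : ∀ z w, ‖f' z - f' w‖ ≤ Lf * ‖z - w‖)
    (g : Euc n → EReal) (hgproper : ProperE g) (hgconv : ConvexEReal g)
    (hglsc : LowerSemicontinuous g)
    (P : ℝ → Euc n → Euc n) (hP : IsProx g P)
    (lam mu : ℝ) (hlam : 0 < lam) (hmu : mu ∈ Set.Ioc 0 (2/(2*lam + Lf)))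
    (x0 η : Euc n) :
    (∀ z w : Euc n,
        ‖P mu ((1 - mu*lam) • z - mu • f' z + (mu*lam) • x0 + mu • η) -
          P mu ((1 - mu*lam) • w - mu • f' w + (mu*lam) • x0 + mu • η)‖ ≤
          (1 - mu*lam) * ‖z - w‖) ∧
      (1 - mu*lam < 1) ∧
      (∀ ν : ℝ, ν ∈ Set.Ioc 0 (2/(2*lam + Lf)) → Lf/(2*lam + Lf) ≤ 1 - ν*lam) ∧
      (∀ ν : ℝ, ν ∈ Set.Ioc 0 (2/(2*lam + Lf)) →
        (1 - ν*lam = Lf/(2*lam + Lf) ↔ ν = 2/(2*lam + Lf))) := by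
  obtain ⟨hmu0, hmu2⟩ := hmu
  have hD : (0:ℝ) < 2*lam + Lf := by linarith
  have hmu2' : mu * (2*lam + Lf) ≤ 2 := by
    rw [← le_div_iff₀ hD]; exact hmu2
  refine ⟨?_, ?_, ?_, ?_⟩
  · intro z w
    have hstep := step_contract f f' Lf hLf hfconv hfgrad hflip lam mu hlam hmu0 hmu2' z w
    have hprox := prox_nonexpansive g hgproper hgconv P hP mu hmu0
      ((1 - mu*lam) • z - mu • f' z + (mu*lam) • x0 + mu • η)
      ((1 - mu*lam) • w - mu • f' w + (mu*lam) • x0 + mu • η)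
    refine le_trans hprox (le_trans (le_of_eq ?_) hstep)
    congr 1
    module
  · nlinarith [mul_pos hmu0 hlam]
  · rintro ν ⟨hν0, hν2⟩
    have hνD : ν * (2*lam + Lf) ≤ 2 := by rw [← le_div_iff₀ hD]; exact hν2
    rw [div_le_iff₀ hD]
    nlinarith [mul_le_mul_of_nonneg_left hνD (le_of_lt hlam)]
  · rintro ν ⟨hν0, hν2⟩
    constructor
    · intro heq
      have h1 : (1 - ν*lam) * (2*lam + Lf) = Lf := by
        rw [heq]; field_simp
      have h2 : lam * (2 - ν*(2*lam + Lf)) = 0 := by linear_combination h1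
      rcases mul_eq_zero.mp h2 with h | h
      · exact absurd h (ne_of_gt hlam)
      · rw [eq_div_iff (ne_of_gt hD)]; linarith
    · intro hν
      rw [hν]
      field_simp
      ring
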